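/- Let G be a stable graph with vertex set [n], where n ≥ 2s, with matching number ν(G) = s. Then {i, 2s − i + 1} is an edge of G for every 1 ≤ i ≤ s; that is, {{i, 2s − i + 1} : 1 ≤ i ≤ s} is a matching of size s in G. -/

import Mathlib

open Finset

/-- `F₁ ≺ F₂`: same size, and the `i`-th smallest element of `F₁` is at most
the `i`-th smallest element of `F₂`. -/
def PrecS (A B : Finset ℕ) : Prop :=
  A.card = B.card ∧
    ∀ i, i < A.card → (A.sort (· ≤ ·)).getD i 0 ≤ (B.sort (· ≤ ·)).getD i 0

/-- A family of subsets of `[n] = {1,…,n}` is stable (shifted). -/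
def IsStable (n : ℕ) (F : Finset (Finset ℕ)) : Prop :=
  ∀ A B : Finset ℕ, A ⊆ Finset.Icc 1 n → B ∈ F → PrecS A B → A ∈ F

/-- Property `U(s, q)`: any `s` edges (repetitions allowed) have union of size at most `q`. -/
def HasU (F : Finset (Finset ℕ)) (s q : ℕ) : Prop :=
  ∀ f : Fin s → Finset ℕ, (∀ i, f i ∈ F) → (Finset.univ.biUnion f).card ≤ q

/-- Matching number: the maximum size of a set of pairwise disjoint edges of `F`. -/
def matchNum (F : Finset (Finset ℕ)) : ℕ :=
  (F.powerset.filter fun M => ∀ a ∈ M, ∀ b ∈ M, a ≠ b → Disjoint a b).sup Finset.card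

/-- Shadow of a 3-uniform family: all 2-element subsets of its edges. -/
def shadow2 (F : Finset (Finset ℕ)) : Finset (Finset ℕ) :=
  F.biUnion fun f => f.powersetCard 2

/-- Deletion of the first `i` vertices: edges disjoint from `[i] = {1,…,i}`. -/
def del (F : Finset (Finset ℕ)) (i : ℕ) : Finset (Finset ℕ) :=
  F.filter fun e => Disjoint e (Finset.Icc 1 i)

/-- Sorting a two-element finset. -/
lemma sort_pair' {a b : ℕ} (h : a < b) : ({a, b} : Finset ℕ).sort (· ≤ ·) = [a, b] := by
  have hne : a ≠ b := h.ne
  have h1 : ({a, b} : Finset ℕ).toList.Perm [a, b] := by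
    have h2 : ({a, b} : Finset ℕ) = insert a {b} := rfl
    rw [h2]
    exact (Finset.toList_insert (by simp [hne])).trans (by rw [Finset.toList_singleton])
  exact List.Perm.eq_of_pairwise' (Finset.pairwise_sort _ _) (by simp [List.Pairwise, h.le])
    ((Finset.sort_perm_toList _ _).trans h1)

/-- Stability applied to a pair of two-element sets. -/
lemma stable_pair {n : ℕ} {G : Finset (Finset ℕ)} (hst : IsStable n G)
    {a b c d : ℕ} (hcd : ({c, d} : Finset ℕ) ∈ G)
    (hab : a < b) (hcd' : c < d) (hac : a ≤ c) (hbd : b ≤ d)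
    (ha1 : 1 ≤ a) (hbn : b ≤ n) :
    ({a, b} : Finset ℕ) ∈ G := by
  apply hst {a, b} {c, d} ?_ hcd ?_
  · intro x hx
    simp only [mem_insert, mem_singleton] at hx
    rcases hx with rfl | rfl <;> simp only [mem_Icc] <;> omega
  · constructor
    · rw [Finset.card_pair hab.ne, Finset.card_pair hcd'.ne]
    · intro i hi
      rw [Finset.card_pair hab.ne] at hi
      rw [sort_pair' hab, sort_pair' hcd']
      interval_cases i <;> simpa

/-- A 2-element set containing two distinct elements is that pair. -/
lemma pair_eq_of_card_two {e : Finset ℕ} (h2 : e.card = 2) {v w : ℕ}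
    (hv : v ∈ e) (hw : w ∈ e) (hne : w ≠ v) : e = {v, w} := by
  obtain ⟨x, y, hxy, rfl⟩ := Finset.card_eq_two.mp h2
  simp only [Finset.mem_insert, Finset.mem_singleton] at hv hw
  rcases hv with rfl | rfl <;> rcases hw with rfl | rfl
  · exact absurd rfl hne
  · rfl
  · exact Finset.pair_comm _ _
  · exact absurd rfl hne

/-- A pairwise disjoint family of 2-element sets has a "partner" function. -/
lemma exists_partner (M : Finset (Finset ℕ)) (h2 : ∀ e ∈ M, e.card = 2)
    (hdisj : ∀ a ∈ M, ∀ b ∈ M, a ≠ b → Disjoint a b) :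
    ∃ g : ℕ → ℕ, ∀ e ∈ M, ∀ v ∈ e, g v ∈ e ∧ g v ≠ v ∧ ({v, g v} : Finset ℕ) = e := by
  classical
  have hex : ∀ v : ℕ, ∃ w : ℕ, ∀ e ∈ M, v ∈ e → w ∈ e ∧ w ≠ v ∧ ({v, w} : Finset ℕ) = e := by
    intro v
    by_cases h : ∃ e, e ∈ M ∧ v ∈ e
    · obtain ⟨e, he, hv⟩ := h
      have hc := h2 e he
      have hne : (e.erase v).Nonempty := by
        apply Finset.card_pos.mp
        rw [Finset.card_erase_of_mem hv, hc]
        omega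
      obtain ⟨w, hw⟩ := hne
      have hw1 : w ≠ v := (Finset.mem_erase.mp hw).1
      have hw2 : w ∈ e := (Finset.mem_erase.mp hw).2
      refine ⟨w, fun e' he' hv' => ?_⟩
      have hee : e' = e := by
        by_contra hne'
        exact Finset.disjoint_left.mp (hdisj e' he' e he hne') hv' hv
      subst hee
      exact ⟨hw2, hw1, (pair_eq_of_card_two hc hv hw2 hw1).symm⟩
    · exact ⟨0, fun e' he' hv' => absurd ⟨e', he', hv'⟩ h⟩
  choose g hg using hex
  refine ⟨g, fun e he v hv => hg v e he hv⟩

/-- Key induction: a fixed-point-free matching involution on a `2s`-element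
subset of `[m, n]` forces the pairs `{m-1+i, m+2s-i}` to be edges. -/
lemma key_lemma {n : ℕ} {G : Finset (Finset ℕ)} (hst : IsStable n G) :
    ∀ s : ℕ, ∀ m : ℕ, 1 ≤ m → ∀ S : Finset ℕ, ∀ g : ℕ → ℕ,
      S ⊆ Finset.Icc m n → S.card = 2 * s →
      (∀ v ∈ S, g v ∈ S ∧ g (g v) = v ∧ g v ≠ v ∧ ({v, g v} : Finset ℕ) ∈ G) →
      ∀ i, 1 ≤ i → i ≤ s → ({m - 1 + i, m + 2 * s - i} : Finset ℕ) ∈ G := by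
  intro s
  induction s with
  | zero => intro m _ S g _ _ _ i h1 h0; omega
  | succ s ih =>
    intro m hm S g hSn hScard hg i hi1 his
    classical
    have hne : S.Nonempty := Finset.card_pos.mp (by omega)
    set b := S.max' hne with hbdef
    set c := S.min' hne with hcdef
    have hbS : b ∈ S := S.max'_mem hne
    have hcS : c ∈ S := S.min'_mem hne
    have hcb : c < b := S.min'_lt_max'_of_card (by omega)
    obtain ⟨haS, hgb, hab, hEab⟩ := hg b hbS
    obtain ⟨hdS, hgc, hdc, hEcd⟩ := hg c hcS
    set a := g b with hadef
    set d := g c with hddef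
    -- now: hgb : g a = b, hgc : g d = c, hab : a ≠ b, hdc : d ≠ c
    have hrange : ∀ v ∈ S, m ≤ v ∧ v ≤ n := by
      intro v hv; exact Finset.mem_Icc.mp (hSn hv)
    have halt : a < b := lt_of_le_of_ne (S.le_max' a haS) hab
    have hcd : c < d := lt_of_le_of_ne (S.min'_le d hdS) (Ne.symm hdc)
    have hbn : b ≤ n := (hrange b hbS).2
    have ham : m ≤ a := (hrange a haS).1
    have hcm : m ≤ c := (hrange c hcS).1
    have hdm : m ≤ d := (hrange d hdS).1
    have hdb : d ≤ b := S.le_max' d hdS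
    have hbig : m + 2 * s + 1 ≤ b := by
      have hsub : S ⊆ Finset.Icc m b := by
        intro v hv; exact Finset.mem_Icc.mpr ⟨(hrange v hv).1, S.le_max' v hv⟩
      have := Finset.card_le_card hsub
      rw [Nat.card_Icc] at this
      omega
    have hinj : ∀ x ∈ S, ∀ y ∈ S, g x = g y → x = y := by
      intro x hx y hy hxy
      have h1 := (hg x hx).2.1
      have h2 := (hg y hy).2.1
      rw [← h1, hxy, h2]
    have had : a ≠ d := by
      intro h
      have hbc : b = c := by rw [← hgb, h, hgc]
      omega
    by_cases hi : i = 1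
    · subst hi
      have e1 : m - 1 + 1 = m := by omega
      have e2 : m + 2 * (s + 1) - 1 = m + 2 * s + 1 := by omega
      rw [e1, e2]
      rw [Finset.pair_comm b a] at hEab
      exact stable_pair hst hEab (by omega) halt ham hbig hm (by omega)
    · -- i ≥ 2 : use induction hypothesis on S minus the min and max
      set S' := (S.erase b).erase c with hS'def
      set g' : ℕ → ℕ := fun v => if v = a then d else if v = d then a else g v with hg'def
      have hmemS' : ∀ v, v ∈ S' ↔ v ∈ S ∧ v ≠ b ∧ v ≠ c := by
        intro v
        simp only [hS'def, Finset.mem_erase]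
        tauto
      have hS'card : S'.card = 2 * s := by
        have h1 : c ∈ S.erase b := Finset.mem_erase.mpr ⟨hcb.ne, hcS⟩
        rw [hS'def, Finset.card_erase_of_mem h1, Finset.card_erase_of_mem hbS, hScard]
        omega
      have hS'sub : S' ⊆ Finset.Icc (m + 1) n := by
        intro v hv
        obtain ⟨hvS, _, hvc⟩ := (hmemS' v).mp hv
        have h1 : c ≤ v := S.min'_le v hvS
        have h2 := hrange v hvS
        have h3 : c ≠ v := fun h => hvc h.symm
        exact Finset.mem_Icc.mpr ⟨by omega, h2.2⟩
      -- edge {a, d} is in G by stability from {a, b}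
      have hEad : ({a, d} : Finset ℕ) ∈ G := by
        rw [Finset.pair_comm b a] at hEab
        rcases lt_or_gt_of_ne had with h | h
        · exact stable_pair hst hEab h halt le_rfl hdb (by omega) (by omega)
        · rw [Finset.pair_comm a d]
          exact stable_pair hst hEab h halt h.le halt.le (by omega) (by omega)
      have hg'prop : ∀ v ∈ S', g' v ∈ S' ∧ g' (g' v) = v ∧ g' v ≠ v ∧
          ({v, g' v} : Finset ℕ) ∈ G := by
        intro v hv
        obtain ⟨hvS, hvb, hvc⟩ := (hmemS' v).mp hv
        by_cases hva : v = a
        · have hacne : a ≠ c := fun h' => hvc (hva.trans h')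
          have hdnb : d ≠ b :=
            fun h => hacne (hadef.trans ((congrArg g h.symm).trans hgc))
          have h1 : g' v = d := by simp [hg'def, hva]
          rw [h1]
          refine ⟨(hmemS' d).mpr ⟨hdS, hdnb, hdc⟩, ?_, ?_, ?_⟩
          · have h2 : g' d = a := by simp [hg'def, Ne.symm had]
            rw [h2]; exact hva.symm
          · rw [hva]; exact Ne.symm had
          · rw [hva]; exact hEad
        · by_cases hvd : v = d
          · have h1 : g' v = a := by simp [hg'def, hvd, Ne.symm had]
            rw [h1]
            have hanb : a ≠ b := hab
            have hanc : a ≠ c :=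
              fun h => hvb (hvd.trans (hddef.trans ((congrArg g h.symm).trans hgb)))
            refine ⟨(hmemS' a).mpr ⟨haS, hanb, hanc⟩, ?_, ?_, ?_⟩
            · have h2 : g' a = d := by simp [hg'def]
              rw [h2]; exact hvd.symm
            · exact fun h => had (h.trans hvd)
            · rw [hvd, Finset.pair_comm d a]; exact hEad
          · have h1 : g' v = g v := by simp [hg'def, hva, hvd]
            obtain ⟨hgvS, hggv, hgvv, hEv⟩ := hg v hvS
            have hgva : g v ≠ a := fun h => hvb (hinj v hvS b hbS (h.trans hadef))
            have hgvd : g v ≠ d := fun h => hvc (hinj v hvS c hcS (h.trans hddef))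
            have hgvb : g v ≠ b := fun h => hva (hinj v hvS a haS (h.trans hgb.symm))
            have hgvc : g v ≠ c := fun h => hvd (hinj v hvS d hdS (h.trans hgc.symm))
            rw [h1]
            refine ⟨(hmemS' (g v)).mpr ⟨hgvS, hgvb, hgvc⟩, ?_, hgvv, hEv⟩
            simp [hg'def, hgva, hgvd, hggv]
      have hIH := ih (m + 1) (by omega) S' g' hS'sub hS'card hg'prop (i - 1)
        (by omega) (by omega)
      have e1 : m + 1 - 1 + (i - 1) = m - 1 + i := by omega
      have e2 : m + 1 + 2 * s - (i - 1) = m + 2 * (s + 1) - i := by omega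
      rw [e1, e2] at hIH
      exact hIH

/-- Lemma 2.2: a stable graph with matching number s contains the matching
consisting of the pairs {i, 2s-i+1} for 1 ≤ i ≤ s. -/
theorem stable_matching (n s : ℕ) (G : Finset (Finset ℕ))
    (hG : ∀ e ∈ G, e ⊆ Finset.Icc 1 n ∧ e.card = 2)
    (hst : IsStable n G)
    (hn : 2 * s ≤ n)
    (hnu : matchNum G = s) :
    ∀ i, 1 ≤ i → i ≤ s → ({i, 2 * s - i + 1} : Finset ℕ) ∈ G := by
  classical
  intro i hi1 his
  -- extract a maximum matching M with M.card = s
  have hnonempty :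
      (G.powerset.filter fun M => ∀ a ∈ M, ∀ b ∈ M, a ≠ b → Disjoint a b).Nonempty := by
    refine ⟨∅, ?_⟩
    simp
  obtain ⟨M, hMmem, hMsup⟩ := Finset.exists_mem_eq_sup _ hnonempty Finset.card
  have hMG : M ⊆ G := Finset.mem_powerset.mp (Finset.mem_filter.mp hMmem).1
  have hMdisj : ∀ a ∈ M, ∀ b ∈ M, a ≠ b → Disjoint a b := (Finset.mem_filter.mp hMmem).2
  have hMcard : M.card = s := by
    rw [← hnu]; unfold matchNum; exact hMsup.symm
  have hM2 : ∀ e ∈ M, e.card = 2 := fun e he => (hG e (hMG he)).2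
  obtain ⟨g, hgspec⟩ := exists_partner M hM2 hMdisj
  set S := M.biUnion (fun e => e) with hSdef
  have hScard : S.card = 2 * s := by
    rw [hSdef, Finset.card_biUnion hMdisj]
    rw [Finset.sum_congr rfl hM2, Finset.sum_const, hMcard, smul_eq_mul]
    omega
  have hSsub : S ⊆ Finset.Icc 1 n := by
    intro v hv
    obtain ⟨e, he, hve⟩ := Finset.mem_biUnion.mp hv
    exact (hG e (hMG he)).1 hve
  have hgS : ∀ v ∈ S, g v ∈ S ∧ g (g v) = v ∧ g v ≠ v ∧ ({v, g v} : Finset ℕ) ∈ G := by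
    intro v hv
    obtain ⟨e, he, hve⟩ := Finset.mem_biUnion.mp hv
    obtain ⟨hgve, hgvv, hpair⟩ := hgspec e he v hve
    have hgvS : g v ∈ S := Finset.mem_biUnion.mpr ⟨e, he, hgve⟩
    refine ⟨hgvS, ?_, hgvv, by rw [hpair]; exact hMG he⟩
    obtain ⟨hggve, hggvv, hpair2⟩ := hgspec e he (g v) hgve
    have hmem : g (g v) ∈ ({v, g v} : Finset ℕ) := by rw [hpair, ← hpair2]; simp
    simp only [Finset.mem_insert, Finset.mem_singleton] at hmem
    rcases hmem with h | h
    · exact h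
    · exact absurd h hggvv
  have hkey := key_lemma hst s 1 le_rfl S g hSsub hScard hgS i hi1 his
  have e1 : 1 - 1 + i = i := by omega
  have e2 : 1 + 2 * s - i = 2 * s - i + 1 := by omega
  rw [e1, e2] at hkey
  exact hkey
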